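/- Let μ ⊇ (j−m−1) be a partition of j−1 with first part μ₁ = j−m−1+t for some 0 ≤ t ≤ m, and let n ≥ j, k ≥ m with k−(n−j) ≤ m. Define μ' = (μ₁+n−j, μ₂,…,μ_s), a partition of n−1 with first part ≥ n−k−1. Then the number of standard skew tableaux of shape μ/(j−m−1) is at most the number of standard skew tableaux of shape μ'/(n−k−1). -/

import Mathlib

/-- The cells of the skew diagram `lam / (r)`: the diagram of `lam` (a list of row
lengths) with the first `r` boxes of the first row removed. -/
def skewCells (lam : List ℕ) (r : ℕ) : Set (ℕ × ℕ) :=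
  {c | c.2 < lam.getD c.1 0 ∧ (c.1 = 0 → r ≤ c.2)}

/-- `f` is a standard skew tableau of shape `lam / (r)`. -/
def IsStdSkew (lam : List ℕ) (r : ℕ) (f : ℕ × ℕ → ℕ) : Prop :=
  (∀ c, c ∉ skewCells lam r → f c = 0) ∧
  Set.BijOn f (skewCells lam r) (Set.Icc 1 (lam.sum - r)) ∧
  (∀ c ∈ skewCells lam r, ∀ c' ∈ skewCells lam r,
    ((c.1 = c'.1 ∧ c.2 < c'.2) ∨ (c.2 = c'.2 ∧ c.1 < c'.1)) → f c < f c')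

/-- `d_{lam/(r)}`: the number of standard skew tableaux of shape `lam / (r)`. -/
noncomputable def numStdSkew (lam : List ℕ) (r : ℕ) : ℕ :=
  Nat.card {f : ℕ × ℕ → ℕ // IsStdSkew lam r f}

lemma getD_le_headI {μ : List ℕ} (hs : List.Pairwise (· ≥ ·) μ) (i : ℕ) :
    μ.getD i 0 ≤ μ.headI := by
  cases μ with
  | nil => simp
  | cons x l =>
    cases i with
    | zero => simp
    | succ i =>
      simp only [List.getD_cons_succ, List.headI_cons]
      by_cases h : i < l.length
      · rw [List.getD_eq_getElem l 0 h]
        exact (List.pairwise_cons.mp hs).1 _ (List.getElem_mem h)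
      · rw [List.getD_eq_default l 0 (by omega)]
        exact Nat.zero_le x

lemma skewCells_finite (lam : List ℕ) (r : ℕ) : (skewCells lam r).Finite := by
  apply Set.Finite.subset (Set.Finite.prod (Set.finite_Iio lam.length) (Set.finite_Iio lam.sum))
  rintro ⟨c1, c2⟩ ⟨h1, -⟩
  have hlen : c1 < lam.length := by
    by_contra h
    rw [List.getD_eq_default lam 0 (by omega)] at h1
    omega
  refine ⟨hlen, ?_⟩
  have h1' : c2 < lam.getD c1 0 := h1
  have hb : lam.getD c1 0 ≤ lam.sum := by
    rw [List.getD_eq_getElem lam 0 hlen]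
    exact List.single_le_sum (fun x _ => Nat.zero_le x) _ (List.getElem_mem hlen)
  simp only [Set.mem_Iio]
  omega

instance isStdSkew_finite (lam : List ℕ) (r : ℕ) :
    Finite {f : ℕ × ℕ → ℕ // IsStdSkew lam r f} := by
  haveI := (skewCells_finite lam r).to_subtype
  haveI : Finite ↥(Set.Icc 1 (lam.sum - r)) := (Set.finite_Icc _ _).to_subtype
  apply Finite.of_injective
    (fun f : {f : ℕ × ℕ → ℕ // IsStdSkew lam r f} =>
      (fun c : ↥(skewCells lam r) =>
        (⟨f.1 c, f.2.2.1.1 c.2⟩ : ↥(Set.Icc 1 (lam.sum - r)))))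
  intro f f' h
  apply Subtype.ext; funext c
  by_cases hc : c ∈ skewCells lam r
  · exact congrArg Subtype.val (congrFun h ⟨c, hc⟩)
  · rw [f.2.1 c hc, f'.2.1 c hc]

def extendMap (r1 r2 t b N1 : ℕ) (f : ℕ × ℕ → ℕ) : ℕ × ℕ → ℕ :=
  fun c =>
    if c.1 = 0 then
      (if r2 ≤ c.2 ∧ c.2 < r2 + t then f (0, r1 + (c.2 - r2))
       else if r2 + t ≤ c.2 ∧ c.2 < b then N1 + (c.2 - (r2 + t)) + 1 else 0)
    else f c

lemma extendMap_zero (r1 r2 t b N1 : ℕ) (f : ℕ × ℕ → ℕ) (c2 : ℕ) :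
    extendMap r1 r2 t b N1 f (0, c2) =
      (if r2 ≤ c2 ∧ c2 < r2 + t then f (0, r1 + (c2 - r2))
       else if r2 + t ≤ c2 ∧ c2 < b then N1 + (c2 - (r2 + t)) + 1 else 0) := rfl

lemma extendMap_succ (r1 r2 t b N1 : ℕ) (f : ℕ × ℕ → ℕ) (i c2 : ℕ) :
    extendMap r1 r2 t b N1 f (i + 1, c2) = f (i + 1, c2) := rfl

lemma mem_skewCells (lam : List ℕ) (r : ℕ) (c1 c2 : ℕ) :
    ((c1, c2) ∈ skewCells lam r) ↔ (c2 < lam.getD c1 0 ∧ (c1 = 0 → r ≤ c2)) :=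
  Iff.rfl

lemma isStdSkew_extend (μ : List ℕ) (r1 r2 t b : ℕ)
    (hs : List.Pairwise (· ≥ ·) μ) (hh : μ.headI = r1 + t)
    (h12 : r1 ≤ r2) (hb : r2 + t ≤ b)
    (f : ℕ × ℕ → ℕ) (hf : IsStdSkew μ r1 f) :
    IsStdSkew (b :: μ.tail) r2 (extendMap r1 r2 t b (μ.sum - r1) f) := by
  obtain ⟨hzero, ⟨hmaps, hinj, hsurj⟩, hmono⟩ := hf
  have hsum0 : μ.sum = r1 + t + μ.tail.sum := by
    cases μ with
    | nil =>
      have hh' : (0 : ℕ) = r1 + t := hh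
      show (0 : ℕ) = r1 + t + (0 : ℕ)
      omega
    | cons x l =>
      simp only [List.headI_cons] at hh
      simp only [List.sum_cons, List.tail_cons]
      omega
  have hg0 : μ.getD 0 0 = r1 + t := by
    cases μ with
    | nil =>
      have hh' : (0 : ℕ) = r1 + t := hh
      simp only [List.getD]
      simpa using hh'
    | cons x l => simpa using hh
  have hgs : ∀ i, μ.getD (i + 1) 0 = μ.tail.getD i 0 := by
    intro i
    cases μ with
    | nil => simp
    | cons x l => simp
  have hle : ∀ i, μ.tail.getD i 0 ≤ r1 + t := by
    intro i
    rw [← hgs i, ← hh]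
    exact getD_le_headI hs (i + 1)
  have hcell0 : ∀ c2, (0, c2) ∈ skewCells μ r1 ↔ (r1 ≤ c2 ∧ c2 < r1 + t) := by
    intro c2
    rw [mem_skewCells, hg0]
    constructor
    · rintro ⟨h1, h2⟩; exact ⟨h2 rfl, h1⟩
    · rintro ⟨h1, h2⟩; exact ⟨h2, fun _ => h1⟩
  have hcells : ∀ i c2, (i + 1, c2) ∈ skewCells μ r1 ↔ c2 < μ.tail.getD i 0 := by
    intro i c2
    rw [mem_skewCells, hgs i]
    constructor
    · rintro ⟨h1, -⟩; exact h1
    · intro h1; exact ⟨h1, fun h => by omega⟩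
  have hcell0' : ∀ c2, (0, c2) ∈ skewCells (b :: μ.tail) r2 ↔ (r2 ≤ c2 ∧ c2 < b) := by
    intro c2
    rw [mem_skewCells, List.getD_cons_zero]
    constructor
    · rintro ⟨h1, h2⟩; exact ⟨h2 rfl, h1⟩
    · rintro ⟨h1, h2⟩; exact ⟨h2, fun _ => h1⟩
  have hcells' : ∀ i c2, (i + 1, c2) ∈ skewCells (b :: μ.tail) r2 ↔ c2 < μ.tail.getD i 0 := by
    intro i c2
    rw [mem_skewCells, List.getD_cons_succ]
    constructor
    · rintro ⟨h1, -⟩; exact h1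
    · intro h1; exact ⟨h1, fun h => by omega⟩
  have hIcc : ∀ c ∈ skewCells μ r1, 1 ≤ f c ∧ f c ≤ μ.sum - r1 := by
    intro c hc
    have := hmaps hc
    simpa [Set.mem_Icc] using this
  have hN2 : (b :: μ.tail).sum - r2 = (μ.sum - r1) + (b - (r2 + t)) := by
    simp only [List.sum_cons]
    omega
  refine ⟨?_, ⟨?_, ?_, ?_⟩, ?_⟩
  -- zero off cells
  · rintro ⟨c1, c2⟩ hc
    cases c1 with
    | zero =>
      rw [hcell0'] at hc
      rw [extendMap_zero, if_neg (by omega), if_neg (by omega)]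
    | succ i =>
      rw [hcells'] at hc
      rw [extendMap_succ]
      exact hzero _ (by rw [hcells]; omega)
  -- MapsTo
  · rintro ⟨c1, c2⟩ hc
    rw [Set.mem_Icc, hN2]
    cases c1 with
    | zero =>
      rw [hcell0'] at hc
      rw [extendMap_zero]
      by_cases h1 : r2 ≤ c2 ∧ c2 < r2 + t
      · rw [if_pos h1]
        have := hIcc _ (show (0, r1 + (c2 - r2)) ∈ skewCells μ r1 by rw [hcell0]; omega)
        omega
      · rw [if_neg h1, if_pos (by omega)]
        omega
    | succ i =>
      rw [extendMap_succ]
      rw [hcells'] at hc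
      have := hIcc _ (show (i + 1, c2) ∈ skewCells μ r1 by rw [hcells]; omega)
      omega
  -- InjOn
  · rintro ⟨c1, c2⟩ hc ⟨c1', c2'⟩ hc' heq
    cases c1 with
    | zero =>
      rw [hcell0'] at hc
      cases c1' with
      | zero =>
        rw [hcell0'] at hc'
        rw [extendMap_zero, extendMap_zero] at heq
        by_cases h1 : r2 ≤ c2 ∧ c2 < r2 + t <;> by_cases h2 : r2 ≤ c2' ∧ c2' < r2 + t
        · rw [if_pos h1, if_pos h2] at heq
          have e1 : (0, r1 + (c2 - r2)) ∈ skewCells μ r1 := by rw [hcell0]; omega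
          have e2 : (0, r1 + (c2' - r2)) ∈ skewCells μ r1 := by rw [hcell0]; omega
          have this2 := hinj e1 e2 heq
          simp only [Prod.mk.injEq] at this2
          have h4 : r1 + (c2 - r2) = r1 + (c2' - r2) := this2.2
          have h5 : c2 = c2' := by omega
          rw [h5]
        · rw [if_pos h1, if_neg h2, if_pos (by omega)] at heq
          have := hIcc _ (show (0, r1 + (c2 - r2)) ∈ skewCells μ r1 by rw [hcell0]; omega)
          exfalso; omega
        · rw [if_neg h1, if_pos (by omega), if_pos h2] at heq
          have := hIcc _ (show (0, r1 + (c2' - r2)) ∈ skewCells μ r1 by rw [hcell0]; omega)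
          exfalso; omega
        · rw [if_neg h1, if_pos (by omega), if_neg h2, if_pos (by omega)] at heq
          have h5 : c2 = c2' := by omega
          rw [h5]
      | succ i' =>
        rw [hcells'] at hc'
        rw [extendMap_zero, extendMap_succ] at heq
        by_cases h1 : r2 ≤ c2 ∧ c2 < r2 + t
        · rw [if_pos h1] at heq
          have e1 : (0, r1 + (c2 - r2)) ∈ skewCells μ r1 := by rw [hcell0]; omega
          have e2 : (i' + 1, c2') ∈ skewCells μ r1 := by rw [hcells]; omega
          have := hinj e1 e2 heq
          simp only [Prod.mk.injEq] at this
          exfalso; omega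
        · rw [if_neg h1, if_pos (by omega)] at heq
          have := hIcc _ (show (i' + 1, c2') ∈ skewCells μ r1 by rw [hcells]; omega)
          exfalso; omega
    | succ i =>
      rw [hcells'] at hc
      cases c1' with
      | zero =>
        rw [hcell0'] at hc'
        rw [extendMap_succ, extendMap_zero] at heq
        by_cases h1 : r2 ≤ c2' ∧ c2' < r2 + t
        · rw [if_pos h1] at heq
          have e1 : (i + 1, c2) ∈ skewCells μ r1 := by rw [hcells]; omega
          have e2 : (0, r1 + (c2' - r2)) ∈ skewCells μ r1 := by rw [hcell0]; omega
          have := hinj e1 e2 heq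
          simp only [Prod.mk.injEq] at this
          exfalso; omega
        · rw [if_neg h1, if_pos (by omega)] at heq
          have := hIcc _ (show (i + 1, c2) ∈ skewCells μ r1 by rw [hcells]; omega)
          exfalso; omega
      | succ i' =>
        rw [hcells'] at hc'
        rw [extendMap_succ, extendMap_succ] at heq
        exact hinj (by rw [hcells]; omega) (by rw [hcells]; omega) heq
  -- SurjOn
  · intro y hy
    rw [Set.mem_Icc, hN2] at hy
    by_cases hy1 : y ≤ μ.sum - r1
    · have hmem : y ∈ Set.Icc 1 (μ.sum - r1) := by rw [Set.mem_Icc]; omega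
      obtain ⟨⟨c1, c2⟩, hcμ, hfc⟩ := hsurj hmem
      cases c1 with
      | zero =>
        rw [hcell0] at hcμ
        refine ⟨(0, c2 + (r2 - r1)), ?_, ?_⟩
        · rw [hcell0']; omega
        · rw [extendMap_zero, if_pos (by omega)]
          have harg : r1 + (c2 + (r2 - r1) - r2) = c2 := by omega
          rw [harg]; exact hfc
      | succ i =>
        rw [hcells] at hcμ
        refine ⟨(i + 1, c2), ?_, ?_⟩
        · rw [hcells']; omega
        · rw [extendMap_succ]; exact hfc
    · refine ⟨(0, r2 + t + (y - (μ.sum - r1) - 1)), ?_, ?_⟩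
      · rw [hcell0']; omega
      · rw [extendMap_zero, if_neg (by omega), if_pos (by omega)]
        omega
  -- strict monotone
  · rintro ⟨c1, c2⟩ hc ⟨c1', c2'⟩ hc' hlt
    simp only at hlt
    cases c1 with
    | zero =>
      rw [hcell0'] at hc
      cases c1' with
      | zero =>
        rw [hcell0'] at hc'
        have hlt2 : c2 < c2' := by omega
        rw [extendMap_zero, extendMap_zero]
        by_cases h1 : r2 ≤ c2 ∧ c2 < r2 + t <;> by_cases h2 : r2 ≤ c2' ∧ c2' < r2 + t
        · rw [if_pos h1, if_pos h2]
          exact hmono _ (by rw [hcell0]; omega) _ (by rw [hcell0]; omega)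
            (Or.inl ⟨rfl, by omega⟩)
        · rw [if_pos h1, if_neg h2, if_pos (by omega)]
          have := hIcc _ (show (0, r1 + (c2 - r2)) ∈ skewCells μ r1 by rw [hcell0]; omega)
          omega
        · omega
        · rw [if_neg h1, if_pos (by omega), if_neg h2, if_pos (by omega)]
          omega
      | succ i' =>
        rw [hcells'] at hc'
        have hcc : c2 = c2' := by omega
        have hup := hle i'
        rw [extendMap_zero, extendMap_succ]
        rw [if_pos (show r2 ≤ c2 ∧ c2 < r2 + t by omega)]
        have e1 : (0, r1 + (c2 - r2)) ∈ skewCells μ r1 := by rw [hcell0]; omega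
        have e2 : (i' + 1, r1 + (c2 - r2)) ∈ skewCells μ r1 := by rw [hcells]; omega
        have e3 : (i' + 1, c2') ∈ skewCells μ r1 := by rw [hcells]; omega
        have step1 : f (0, r1 + (c2 - r2)) < f (i' + 1, r1 + (c2 - r2)) :=
          hmono _ e1 _ e2 (Or.inr ⟨rfl, by omega⟩)
        have step2 : f (i' + 1, r1 + (c2 - r2)) ≤ f (i' + 1, c2') := by
          rcases Nat.lt_or_ge (r1 + (c2 - r2)) c2' with h | h
          · exact le_of_lt (hmono _ e2 _ e3 (Or.inl ⟨rfl, h⟩))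
          · have harg : r1 + (c2 - r2) = c2' := by omega
            rw [harg]
        omega
    | succ i =>
      rw [hcells'] at hc
      cases c1' with
      | zero => omega
      | succ i' =>
        rw [hcells'] at hc'
        rw [extendMap_succ, extendMap_succ]
        refine hmono _ (by rw [hcells]; omega) _ (by rw [hcells]; omega) ?_
        simp only
        omega

lemma extendMap_inj (μ : List ℕ) (r1 r2 t b : ℕ)
    (hh : μ.headI = r1 + t) (h12 : r1 ≤ r2)
    (f f' : ℕ × ℕ → ℕ) (hf : IsStdSkew μ r1 f) (hf' : IsStdSkew μ r1 f')
    (h : extendMap r1 r2 t b (μ.sum - r1) f = extendMap r1 r2 t b (μ.sum - r1) f') :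
    f = f' := by
  have hg0 : μ.getD 0 0 = r1 + t := by
    cases μ with
    | nil =>
      have hh' : (0 : ℕ) = r1 + t := hh
      simp only [List.getD]
      simpa using hh'
    | cons x l => simpa using hh
  funext c
  obtain ⟨c1, c2⟩ := c
  cases c1 with
  | succ i =>
    have := congrFun h (i + 1, c2)
    rwa [extendMap_succ, extendMap_succ] at this
  | zero =>
    by_cases hc : r1 ≤ c2 ∧ c2 < r1 + t
    · have := congrFun h (0, c2 + (r2 - r1))
      have hcond : r2 ≤ c2 + (r2 - r1) ∧ c2 + (r2 - r1) < r2 + t := by omega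
      rw [extendMap_zero, extendMap_zero, if_pos hcond, if_pos hcond] at this
      have harg : r1 + (c2 + (r2 - r1) - r2) = c2 := by omega
      rwa [harg] at this
    · have hnc : (0, c2) ∉ skewCells μ r1 := by
        rw [mem_skewCells, hg0]
        intro hmem
        exact hc ⟨hmem.2 rfl, hmem.1⟩
      rw [hf.1 _ hnc, hf'.1 _ hnc]

/-- Let `μ ⊇ (j−m−1)` be a partition of `j−1` with first part `μ₁ = j−m−1+t` for some
`0 ≤ t ≤ m`, and let `n ≥ j`, `k ≥ m` with `k − (n−j) ≤ m`. Let `μ'` be obtained from `μ`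
by lengthening the first row to `μ₁ + (n−j)` (so `μ'` is a partition of `n−1` with first
part `≥ n−k−1`). Then the number of standard skew tableaux of shape `μ/(j−m−1)` is at
most the number of standard skew tableaux of shape `μ'/(n−k−1)`. -/
theorem stmt_10 (n j m k t : ℕ) (μ : List ℕ)
    (hsort : List.Pairwise (· ≥ ·) μ) (hpos : ∀ x ∈ μ, 0 < x) (hsum : μ.sum = j - 1)
    (hhead : μ.headI = j - m - 1 + t) (ht : t ≤ m) (hmk : m ≤ k) (hjn : j ≤ n)
    (hkm : k ≤ m + (n - j)) :
    numStdSkew μ (j - m - 1) ≤ numStdSkew ((μ.headI + (n - j)) :: μ.tail) (n - k - 1) := by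
  have h12 : j - m - 1 ≤ n - k - 1 := by omega
  have hb : (n - k - 1) + t ≤ μ.headI + (n - j) := by
    rw [hhead]; omega
  refine Nat.card_le_card_of_injective
    (fun f : {f : ℕ × ℕ → ℕ // IsStdSkew μ (j - m - 1) f} =>
      (⟨extendMap (j - m - 1) (n - k - 1) t (μ.headI + (n - j)) (μ.sum - (j - m - 1)) f.1,
        isStdSkew_extend μ (j - m - 1) (n - k - 1) t (μ.headI + (n - j))
          hsort hhead h12 hb f.1 f.2⟩ :
        {f : ℕ × ℕ → ℕ // IsStdSkew ((μ.headI + (n - j)) :: μ.tail) (n - k - 1) f})) ?_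
  intro f f' hff
  apply Subtype.ext
  exact extendMap_inj μ (j - m - 1) (n - k - 1) t (μ.headI + (n - j)) hhead h12
    f.1 f'.1 f.2 f'.2 (congrArg Subtype.val hff)
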